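/- (Lemma 4.1) Let G be a countably infinite group, ν a multiorder on G, (F_m)_{m∈ℕ} a Følner sequence in G, n ∈ ℕ and ε > 0. Then for all sufficiently large m there exists a Borel set Õ'_m ⊆ Õ with ν(Õ'_m) > 1 − ε such that for every ≺ ∈ Õ'_m both |[F_m, F_m+n]^≺| < (1+ε)·|F_m| and |[F_m−n, F_m]^≺| < (1+ε)·|F_m| hold. -/

import Mathlib

open MeasureTheory Filter
open scoped Classical symmDiff

/-- An *order of type ℤ* on `G`. -/
def IsZOrder {G : Type*} (r : G → G → Prop) : Prop :=
  IsStrictTotalOrder G r ∧ (∀ a b : G, {g : G | r a g ∧ r g b}.Finite) ∧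
    (∀ a : G, ∃ b, r b a) ∧ (∀ a : G, ∃ b, r a b)

/-- The relation on `G` encoded by an element of `{0,1}^{G×G}`. -/
def relOf {G : Type*} (x : G × G → Bool) : G → G → Prop := fun a b => x (a, b) = true

/-- The set `Õ` of orders of type ℤ on `G`, as a subset of `{0,1}^{G×G}`. -/
def ZOrders (G : Type*) : Set (G × G → Bool) := {x | IsZOrder (relOf x)}

/-- The `G`-action on `{0,1}^{G×G}` corresponding to `a (g(≺)) b ⟺ ag ≺ bg`. -/
def actB {G : Type*} [Group G] (g : G) (x : G × G → Bool) : G × G → Bool :=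
  fun p => x (p.1 * g, p.2 * g)

/-- `f : ℤ → G` is an anchored order isomorphism from `(ℤ,<)` to `(G,r)`. -/
def IsAnchoredIso {G : Type*} [One G] (r : G → G → Prop) (f : ℤ → G) : Prop :=
  Function.Bijective f ∧ f 0 = 1 ∧ ∀ i j : ℤ, i < j ↔ r (f i) (f j)

/-- The anchored bijection `bi_≺ : ℤ → G` associated with an order of type ℤ. -/
noncomputable def biOf {G : Type*} [One G] (r : G → G → Prop) : ℤ → G :=
  if h : ∃ f : ℤ → G, IsAnchoredIso r f then h.choose else fun _ => 1

/-- The index `k ∈ ℤ` of `g ∈ G` in the enumeration `bi_≺` (junk value `0` if none). -/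
noncomputable def idxOf {G : Type*} [One G] (r : G → G → Prop) (g : G) : ℤ :=
  if h : ∃ k : ℤ, biOf r k = g then h.choose else 0

/-- The order interval `[g, g+n]^≺` of length `n+1` starting at `g`. -/
noncomputable def fwdInt {G : Type*} [One G] (r : G → G → Prop) (g : G) (n : ℕ) :
    Finset G :=
  (Finset.range (n + 1)).image (fun i => biOf r (idxOf r g + i))

/-- The order interval `[g−n, g]^≺` of length `n+1` ending at `g`. -/
noncomputable def bwdInt {G : Type*} [One G] (r : G → G → Prop) (g : G) (n : ℕ) :
    Finset G :=
  (Finset.range (n + 1)).image (fun i => biOf r (idxOf r g - i))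

/-- A Følner sequence in `G`. -/
def IsFolnerSeq {G : Type*} [Group G] (F : ℕ → Finset G) : Prop :=
  (∀ n, (F n).Nonempty) ∧ ∀ g : G,
    Tendsto (fun n => ((F n ∆ (F n).image (fun h => g * h)).card : ℝ) / (F n).card)
      atTop (nhds 0)

set_option linter.unusedSectionVars false
set_option linter.unusedVariables false
set_option maxHeartbeats 1000000
open Set
open scoped ENNReal

section P1
/-! ### Part 1 : existence and uniqueness of the anchored isomorphism -/

lemma int_selfmap_id {f : ℤ → ℤ} (hmono : ∀ i j : ℤ, i < j ↔ f i < f j)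
    (hsurj : Function.Surjective f) (h0 : f 0 = 0) : ∀ i, f i = i := by
  have hsucc : ∀ k : ℤ, f (k + 1) = f k + 1 := by
    intro k
    have h1 : f k < f (k + 1) := (hmono k (k + 1)).1 (by omega)
    obtain ⟨j, hj⟩ := hsurj (f k + 1)
    have hkj : k < j := (hmono k j).2 (by omega)
    have hjk : j ≤ k + 1 := by
      by_contra hc
      have := (hmono (k + 1) j).1 (by omega)
      omega
    have hjj : j = k + 1 := by omega
    rw [hjj] at hj
    exact hj
  have hsucc' : ∀ k : ℤ, f (k + 1) = f k + 1 := hsucc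
  intro i
  induction i using Int.induction_on with
  | zero => exact h0
  | succ k ih => rw [hsucc k, ih]
  | pred k ih =>
      have := hsucc (-(k:ℤ) - 1)
      simp only [sub_add_cancel] at this
      omega

lemma anchoredIso_unique {G : Type*} [One G] {r : G → G → Prop} {f f' : ℤ → G}
    (hf : IsAnchoredIso r f) (hf' : IsAnchoredIso r f') : f = f' := by
  obtain ⟨hb, h0, ho⟩ := hf
  obtain ⟨hb', h0', ho'⟩ := hf'
  let e' := Equiv.ofBijective f' hb'
  have he' : ∀ i, f' (e'.symm (f i)) = f i := fun i => e'.apply_symm_apply (f i)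
  set φ : ℤ → ℤ := fun i => e'.symm (f i) with hφ
  have hmono : ∀ i j : ℤ, i < j ↔ φ i < φ j := by
    intro i j
    rw [ho i j, ho' (φ i) (φ j), he', he']
  have hsurj : Function.Surjective φ := fun j => by
    obtain ⟨i, hi⟩ := hb.surjective (f' j)
    refine ⟨i, ?_⟩
    rw [Equiv.symm_apply_eq, Equiv.ofBijective_apply]
    exact hi
  have hφ0 : φ 0 = 0 := by
    have : f' (φ 0) = f' 0 := by rw [he', h0, h0']
    exact hb'.injective this
  have hid := int_selfmap_id hmono hsurj hφ0
  funext i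
  have h2 := he' i
  rw [show e'.symm (f i) = i from hid i] at h2
  exact h2.symm

lemma IsZOrder.exists_anchoredIso {G : Type*} [One G] {r : G → G → Prop} (h : IsZOrder r) :
    ∃ f : ℤ → G, IsAnchoredIso r f := by
  obtain ⟨hsto, hfin, hmin, hmax⟩ := h
  haveI := hsto
  haveI : DecidableRel r := Classical.decRel r
  letI : LinearOrder G := linearOrderOfSTO r
  have hlt : ∀ a b : G, a < b ↔ r a b := fun a b => Iff.rfl
  letI : LocallyFiniteOrder G := LocallyFiniteOrder.ofFiniteIcc (fun a b => by
    have : Set.Icc a b ⊆ {a, b} ∪ {g : G | r a g ∧ r g b} := by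
      intro g hg
      rcases eq_or_lt_of_le hg.1 with h1 | h1
      · exact Or.inl (Or.inl h1.symm)
      rcases eq_or_lt_of_le hg.2 with h2 | h2
      · exact Or.inl (Or.inr h2)
      · exact Or.inr ⟨(hlt _ _).1 h1, (hlt _ _).1 h2⟩
    exact Set.Finite.subset (((Set.finite_singleton b).insert a).union (hfin a b)) this)
  haveI : NoMinOrder G := ⟨fun a => (hmin a).imp fun b hb => (hlt _ _).2 hb⟩
  haveI : NoMaxOrder G := ⟨fun a => (hmax a).imp fun b hb => (hlt _ _).2 hb⟩
  haveI : Nonempty G := ⟨1⟩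
  letI := LinearLocallyFiniteOrder.succOrder G
  letI := LinearLocallyFiniteOrder.predOrder G
  let e : G ≃o ℤ := orderIsoIntOfLinearSuccPredArch
  refine ⟨fun i => e.symm (i + e 1), ⟨?_, ?_⟩, ?_, ?_⟩
  · intro i j hij
    have := congrArg e hij
    simp only [OrderIso.apply_symm_apply] at this
    omega
  · intro g
    exact ⟨e g - e 1, by simp⟩
  · simp
  · intro i j
    rw [← hlt]
    constructor
    · intro hij
      exact (OrderIso.lt_iff_lt e.symm).2 (by omega)
    · intro hij
      have := (OrderIso.lt_iff_lt e.symm).1 hij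
      omega

end P1

section P2
variable {G : Type*}

/-! ### basic properties of `biOf` / `idxOf` -/

lemma biOf_anchored [One G] {r : G → G → Prop} (h : IsZOrder r) :
    IsAnchoredIso r (biOf r) := by
  have hex := h.exists_anchoredIso
  rw [biOf, dif_pos hex]
  exact hex.choose_spec

lemma biOf_zero [One G] {r : G → G → Prop} (h : IsZOrder r) : biOf r 0 = 1 :=
  (biOf_anchored h).2.1

lemma biOf_lt_iff [One G] {r : G → G → Prop} (h : IsZOrder r) (i j : ℤ) :
    i < j ↔ r (biOf r i) (biOf r j) := (biOf_anchored h).2.2 i j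

lemma biOf_idxOf [One G] {r : G → G → Prop} (h : IsZOrder r) (g : G) :
    biOf r (idxOf r g) = g := by
  have hex : ∃ k : ℤ, biOf r k = g := (biOf_anchored h).1.surjective g
  rw [idxOf, dif_pos hex]
  exact hex.choose_spec

lemma idxOf_biOf [One G] {r : G → G → Prop} (h : IsZOrder r) (k : ℤ) :
    idxOf r (biOf r k) = k :=
  (biOf_anchored h).1.injective (biOf_idxOf h _)

lemma between_eq_image [One G] {r : G → G → Prop} (h : IsZOrder r) (i j : ℤ) :
    {g : G | r (biOf r i) g ∧ r g (biOf r j)} = biOf r '' (Set.Ioo i j) := by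
  ext g
  constructor
  · rintro ⟨h1, h2⟩
    obtain ⟨k, rfl⟩ := (biOf_anchored h).1.surjective g
    exact ⟨k, ⟨(biOf_lt_iff h _ _).2 h1, (biOf_lt_iff h _ _).2 h2⟩, rfl⟩
  · rintro ⟨k, ⟨hk1, hk2⟩, rfl⟩
    exact ⟨(biOf_lt_iff h _ _).1 hk1, (biOf_lt_iff h _ _).1 hk2⟩

/-! ### the "between set" and explicit measurable characterization of `biOf` -/

def btwSet (x : G × G → Bool) (a b : G) : Set G := {g : G | relOf x a g ∧ relOf x g b}

/-- `biOf (relOf x) i = u`, characterized concretely. -/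
lemma biOf_eq_iff (x : G × G → Bool) [One G] (hx : IsZOrder (relOf x)) (i : ℤ) (u : G) :
    biOf (relOf x) i = u ↔
      (if i = 0 then u = 1 else if 0 < i then
        relOf x 1 u ∧ ∃ S : Finset G, ↑S = btwSet x 1 u ∧ S.card = (i - 1).toNat
      else
        relOf x u 1 ∧ ∃ S : Finset G, ↑S = btwSet x u 1 ∧ S.card = (-i - 1).toNat) := by
  set r := relOf x with hr
  have hb := (biOf_anchored hx).1
  rcases lt_trichotomy i 0 with hi | hi | hi
  · rw [if_neg (by omega), if_neg (by omega)]
    constructor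
    · rintro rfl
      have h1 : r (biOf r i) 1 := by
        rw [← biOf_zero hx]
        exact (biOf_lt_iff hx _ _).1 hi
      refine ⟨h1, (Finset.Ioo i 0).image (biOf r), ?_, ?_⟩
      · rw [Finset.coe_image, Finset.coe_Ioo]
        have : btwSet x (biOf r i) 1 = {g : G | r (biOf r i) g ∧ r g (biOf r 0)} := by
          rw [biOf_zero hx]; rfl
        rw [this, between_eq_image hx]
      · rw [Finset.card_image_of_injective _ hb.injective, Int.card_Ioo]
        omega
    · rintro ⟨h1, S, hS, hcard⟩
      obtain ⟨j, rfl⟩ := hb.surjective u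
      have hj : j < 0 := by
        rw [biOf_lt_iff hx]
        rwa [← biOf_zero hx] at h1
      have hbtw : btwSet x (biOf r j) 1 = biOf r '' (Set.Ioo j 0) := by
        have : btwSet x (biOf r j) 1 = {g : G | r (biOf r j) g ∧ r g (biOf r 0)} := by
          rw [biOf_zero hx]; rfl
        rw [this, between_eq_image hx]
      have hSeq : S = (Finset.Ioo j 0).image (biOf r) := by
        apply Finset.coe_injective
        rw [hS, hbtw, Finset.coe_image, Finset.coe_Ioo]
      rw [hSeq, Finset.card_image_of_injective _ hb.injective, Int.card_Ioo] at hcard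
      have : j = i := by omega
      rw [this]
  · rw [if_pos (by omega)]
    subst hi
    rw [biOf_zero hx]
    exact eq_comm
  · rw [if_neg (by omega), if_pos hi]
    constructor
    · rintro rfl
      have h1 : r 1 (biOf r i) := by
        rw [← biOf_zero hx]
        exact (biOf_lt_iff hx _ _).1 hi
      refine ⟨h1, (Finset.Ioo 0 i).image (biOf r), ?_, ?_⟩
      · rw [Finset.coe_image, Finset.coe_Ioo]
        have : btwSet x 1 (biOf r i) = {g : G | r (biOf r 0) g ∧ r g (biOf r i)} := by
          rw [biOf_zero hx]; rfl
        rw [this, between_eq_image hx]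
      · rw [Finset.card_image_of_injective _ hb.injective, Int.card_Ioo]
        omega
    · rintro ⟨h1, S, hS, hcard⟩
      obtain ⟨j, rfl⟩ := hb.surjective u
      have hj : 0 < j := by
        rw [biOf_lt_iff hx]
        rwa [← biOf_zero hx] at h1
      have hbtw : btwSet x 1 (biOf r j) = biOf r '' (Set.Ioo 0 j) := by
        have : btwSet x 1 (biOf r j) = {g : G | r (biOf r 0) g ∧ r g (biOf r j)} := by
          rw [biOf_zero hx]; rfl
        rw [this, between_eq_image hx]
      have hSeq : S = (Finset.Ioo 0 j).image (biOf r) := by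
        apply Finset.coe_injective
        rw [hS, hbtw, Finset.coe_image, Finset.coe_Ioo]
      rw [hSeq, Finset.card_image_of_injective _ hb.injective, Int.card_Ioo] at hcard
      have : j = i := by omega
      rw [this]

end P2

section P2b
variable {G : Type*} [Countable G]

def coordSet (a b : G) : Set (G × G → Bool) := {x | x (a, b) = true}

lemma measurable_coordSet (a b : G) : MeasurableSet (coordSet a b) := by
  have : coordSet a b = (fun x : G × G → Bool => x (a, b)) ⁻¹' {true} := by
    ext x; simp [coordSet]
  rw [this]
  exact measurable_pi_apply (a, b) (measurableSet_singleton true)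

lemma mem_coordSet {a b : G} {x : G × G → Bool} : x ∈ coordSet a b ↔ relOf x a b := Iff.rfl

/-- `{x | btwSet x a b = ↑S}` is measurable. -/
def MsetS (a b : G) (S : Finset G) : Set (G × G → Bool) := {x | btwSet x a b = ↑S}

lemma MsetS_eq (a b : G) (S : Finset G) :
    MsetS a b S = ⋂ g : G,
      (if g ∈ S then coordSet a g ∩ coordSet g b else (coordSet a g ∩ coordSet g b)ᶜ) := by
  ext x
  simp only [MsetS, Set.mem_setOf_eq, Set.mem_iInter]
  constructor
  · intro h g
    have : g ∈ btwSet x a b ↔ g ∈ S := by rw [h]; simp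
    by_cases hg : g ∈ S
    · rw [if_pos hg]
      exact (this.2 hg : relOf x a g ∧ relOf x g b)
    · rw [if_neg hg]
      intro hc
      exact hg (this.1 hc)
  · intro h
    ext g
    have := h g
    by_cases hg : g ∈ S
    · rw [if_pos hg] at this
      simp only [Finset.mem_coe, hg, iff_true]
      exact this
    · rw [if_neg hg] at this
      simp only [Finset.mem_coe, hg, iff_false]
      exact this

lemma measurable_MsetS (a b : G) (S : Finset G) : MeasurableSet (MsetS a b S) := by
  rw [MsetS_eq]
  refine MeasurableSet.iInter fun g => ?_
  split_ifs
  · exact (measurable_coordSet a g).inter (measurable_coordSet g b)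
  · exact ((measurable_coordSet a g).inter (measurable_coordSet g b)).compl

def EbtSet [One G] (i : ℤ) (u : G) : Set (G × G → Bool) :=
  if i = 0 then (if u = 1 then Set.univ else ∅)
  else if 0 < i then
    coordSet 1 u ∩ ⋃ (S : Finset G) (_ : S.card = (i - 1).toNat), MsetS 1 u S
  else
    coordSet u 1 ∩ ⋃ (S : Finset G) (_ : S.card = (-i - 1).toNat), MsetS u 1 S

lemma measurable_EbtSet [One G] (i : ℤ) (u : G) : MeasurableSet (EbtSet i u) := by
  unfold EbtSet
  split_ifs
  · exact MeasurableSet.univ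
  · exact MeasurableSet.empty
  · exact (measurable_coordSet 1 u).inter
      (MeasurableSet.iUnion fun S => MeasurableSet.iUnion fun _ => measurable_MsetS 1 u S)
  · exact (measurable_coordSet u 1).inter
      (MeasurableSet.iUnion fun S => MeasurableSet.iUnion fun _ => measurable_MsetS u 1 S)

lemma mem_EbtSet_iff [One G] {x : G × G → Bool} (i : ℤ) (u : G) :
    x ∈ EbtSet i u ↔
      (if i = 0 then u = 1 else if 0 < i then
        relOf x 1 u ∧ ∃ S : Finset G, ↑S = btwSet x 1 u ∧ S.card = (i - 1).toNat
      else
        relOf x u 1 ∧ ∃ S : Finset G, ↑S = btwSet x u 1 ∧ S.card = (-i - 1).toNat) := by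
  unfold EbtSet
  split_ifs with h1 h2 h2
  · simp [h2]
  · simp [h2, Ne.symm h2]
  · simp only [Set.mem_inter_iff, mem_coordSet, Set.mem_iUnion]
    constructor
    · rintro ⟨hr, S, hcard, hS⟩
      exact ⟨hr, S, hS.symm, hcard⟩
    · rintro ⟨hr, S, hS, hcard⟩
      exact ⟨hr, S, hcard, hS.symm⟩
  · simp only [Set.mem_inter_iff, mem_coordSet, Set.mem_iUnion]
    constructor
    · rintro ⟨hr, S, hcard, hS⟩
      exact ⟨hr, S, hS.symm, hcard⟩
    · rintro ⟨hr, S, hS, hcard⟩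
      exact ⟨hr, S, hcard, hS.symm⟩

end P2b

section P2c
variable {G : Type*} [Countable G]

lemma measurable_ZOrders : MeasurableSet (ZOrders G) := by
  have heq : ZOrders G =
      (⋂ (a : G) (b : G), {x : G × G → Bool | a = b} ∪ coordSet a b ∪ coordSet b a)
      ∩ (⋂ a : G, (coordSet a a)ᶜ)
      ∩ (⋂ (a : G) (b : G) (c : G), (coordSet a b ∩ coordSet b c)ᶜ ∪ coordSet a c)
      ∩ (⋂ (a : G) (b : G), ⋃ S : Finset G,
          ⋂ g : G, (if g ∈ S then Set.univ else (coordSet a g ∩ coordSet g b)ᶜ))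
      ∩ (⋂ a : G, ⋃ b : G, coordSet b a)
      ∩ (⋂ a : G, ⋃ b : G, coordSet a b) := by
    ext x
    constructor
    · rintro ⟨hsto, hfin, hmin, hmax⟩
      refine ⟨⟨⟨⟨⟨?_, ?_⟩, ?_⟩, ?_⟩, ?_⟩, ?_⟩
      · refine Set.mem_iInter.2 fun a => Set.mem_iInter.2 fun b => ?_
        rcases trichotomous_of (r := relOf x) a b with h | h | h
        · exact Or.inl (Or.inr h)
        · exact Or.inl (Or.inl h)
        · exact Or.inr h
      · exact Set.mem_iInter.2 fun a => hsto.irrefl a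
      · refine Set.mem_iInter.2 fun a => Set.mem_iInter.2 fun b =>
          Set.mem_iInter.2 fun c => ?_
        by_cases h : relOf x a b ∧ relOf x b c
        · exact Or.inr (hsto.trans a b c h.1 h.2)
        · exact Or.inl h
      · refine Set.mem_iInter.2 fun a => Set.mem_iInter.2 fun b => ?_
        refine Set.mem_iUnion.2 ⟨(hfin a b).toFinset, Set.mem_iInter.2 fun g => ?_⟩
        by_cases hg : g ∈ (hfin a b).toFinset
        · rw [if_pos hg]; trivial
        · rw [if_neg hg]
          intro hc
          exact hg ((hfin a b).mem_toFinset.2 hc)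
      · refine Set.mem_iInter.2 fun a => ?_
        obtain ⟨b, hb⟩ := hmin a
        exact Set.mem_iUnion.2 ⟨b, hb⟩
      · refine Set.mem_iInter.2 fun a => ?_
        obtain ⟨b, hb⟩ := hmax a
        exact Set.mem_iUnion.2 ⟨b, hb⟩
    · rintro ⟨⟨⟨⟨⟨htri, hirr⟩, htrans⟩, hfin⟩, hmin⟩, hmax⟩
      have ht1 : IsTrichotomous G (relOf x) := by
        constructor
        intro a b h1 h2
        have h := Set.mem_iInter.1 (Set.mem_iInter.1 htri a) b
        rcases h with (h | h) | h
        · exact h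
        · exact absurd h h1
        · exact absurd h h2
      have ht2 : IsIrrefl G (relOf x) := ⟨fun a => Set.mem_iInter.1 hirr a⟩
      have ht3 : IsTrans G (relOf x) := by
        constructor
        intro a b c h1 h2
        have h := Set.mem_iInter.1 (Set.mem_iInter.1 (Set.mem_iInter.1 htrans a) b) c
        rcases h with h | h
        · exact absurd ⟨h1, h2⟩ h
        · exact h
      refine ⟨@IsStrictTotalOrder.mk _ _ ht1 ⟨⟩, ?_, ?_, ?_⟩
      · intro a b
        obtain ⟨S, hS⟩ := Set.mem_iUnion.1
          (Set.mem_iInter.1 (Set.mem_iInter.1 hfin a) b)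
        refine Set.Finite.subset S.finite_toSet fun g hg => ?_
        have h := Set.mem_iInter.1 hS g
        by_contra hgS
        simp only [Finset.mem_coe] at hgS
        rw [if_neg hgS] at h
        exact h hg
      · intro a
        obtain ⟨b, hb⟩ := Set.mem_iUnion.1 (Set.mem_iInter.1 hmin a)
        exact ⟨b, hb⟩
      · intro a
        obtain ⟨b, hb⟩ := Set.mem_iUnion.1 (Set.mem_iInter.1 hmax a)
        exact ⟨b, hb⟩
  rw [heq]
  have h1 : MeasurableSet
      (⋂ (a : G) (b : G), {x : G × G → Bool | a = b} ∪ coordSet a b ∪ coordSet b a) := by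
    refine MeasurableSet.iInter fun a => MeasurableSet.iInter fun b => ?_
    refine MeasurableSet.union (MeasurableSet.union ?_ (measurable_coordSet a b))
      (measurable_coordSet b a)
    by_cases h : a = b
    · simp only [h]
      exact MeasurableSet.univ.congr (by ext x; simp)
    · have : {x : G × G → Bool | a = b} = ∅ := by ext x; simp [h]
      rw [this]; exact MeasurableSet.empty
  refine ((((h1.inter ?_).inter ?_).inter ?_).inter ?_).inter ?_
  · exact MeasurableSet.iInter fun a => (measurable_coordSet a a).compl
  · exact MeasurableSet.iInter fun a => MeasurableSet.iInter fun b =>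
      MeasurableSet.iInter fun c =>
        (((measurable_coordSet a b).inter (measurable_coordSet b c)).compl).union
          (measurable_coordSet a c)
  · refine MeasurableSet.iInter fun a => MeasurableSet.iInter fun b =>
      MeasurableSet.iUnion fun S => MeasurableSet.iInter fun g => ?_
    split_ifs
    · exact MeasurableSet.univ
    · exact ((measurable_coordSet a g).inter (measurable_coordSet g b)).compl
  · exact MeasurableSet.iInter fun a => MeasurableSet.iUnion fun b => measurable_coordSet b a
  · exact MeasurableSet.iInter fun a => MeasurableSet.iUnion fun b => measurable_coordSet a b

end P2c

section P3
variable {G : Type*} [Group G]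

/-! ### Part 3 : equivariance -/

lemma actB_actB (g h : G) (x : G × G → Bool) : actB h (actB g x) = actB (h * g) x := by
  funext p; simp [actB, mul_assoc]

lemma actB_one (x : G × G → Bool) : actB (1 : G) x = x := by funext p; simp [actB]

lemma relOf_actB (g : G) (x : G × G → Bool) (a b : G) :
    relOf (actB g x) a b ↔ relOf x (a * g) (b * g) := Iff.rfl

lemma measurable_actB [Countable G] (g : G) : Measurable (actB g : (G × G → Bool) → (G × G → Bool)) :=
  measurable_pi_lambda _ (fun p => measurable_pi_apply _)

lemma mem_ZOrders_actB (g : G) {x : G × G → Bool} (hx : x ∈ ZOrders G) :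
    actB g x ∈ ZOrders G := by
  obtain ⟨hsto, hfin, hmin, hmax⟩ := hx
  have ht1 : IsTrichotomous G (relOf (actB g x)) := by
    constructor
    intro a b h1 h2
    rcases trichotomous_of (r := relOf x) (a * g) (b * g) with h | h | h
    · exact absurd h h1
    · exact mul_right_cancel h
    · exact absurd h h2
  have ht2 : IsIrrefl G (relOf (actB g x)) := ⟨fun a => hsto.irrefl (a * g)⟩
  have ht3 : IsTrans G (relOf (actB g x)) := ⟨fun a b c h1 h2 => hsto.trans _ _ _ h1 h2⟩
  refine ⟨@IsStrictTotalOrder.mk _ _ ht1 ⟨⟩, ?_, ?_, ?_⟩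
  · intro a b
    have : {c : G | relOf (actB g x) a c ∧ relOf (actB g x) c b} =
        (fun d => d * g⁻¹) '' {d : G | relOf x (a * g) d ∧ relOf x d (b * g)} := by
      ext c
      constructor
      · rintro ⟨h1, h2⟩
        exact ⟨c * g, ⟨h1, h2⟩, by simp⟩
      · rintro ⟨d, ⟨h1, h2⟩, rfl⟩
        refine ⟨?_, ?_⟩ <;> simp [relOf_actB, mul_assoc]
        · simpa using h1
        · simpa using h2
    rw [this]
    exact ((hfin (a * g) (b * g)).image _)
  · intro a
    obtain ⟨b, hb⟩ := hmin (a * g)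
    exact ⟨b * g⁻¹, by simp [relOf_actB, mul_assoc]; simpa using hb⟩
  · intro a
    obtain ⟨b, hb⟩ := hmax (a * g)
    exact ⟨b * g⁻¹, by simp [relOf_actB, mul_assoc]; simpa using hb⟩

lemma mem_ZOrders_actB_iff (g : G) {x : G × G → Bool} :
    actB g x ∈ ZOrders G ↔ x ∈ ZOrders G := by
  constructor
  · intro h
    have := mem_ZOrders_actB g⁻¹ h
    rwa [actB_actB, inv_mul_cancel, actB_one] at this
  · exact mem_ZOrders_actB g

lemma biOf_actB {x : G × G → Bool} (hx : x ∈ ZOrders G) (g : G) :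
    biOf (relOf (actB g x)) =
      fun i => biOf (relOf x) (i + idxOf (relOf x) g) * g⁻¹ := by
  have hx' : actB g x ∈ ZOrders G := mem_ZOrders_actB g hx
  refine anchoredIso_unique (biOf_anchored hx') ?_
  set r := relOf x with hr
  set k := idxOf r g with hk
  have hb := (biOf_anchored (hx : IsZOrder r)).1
  refine ⟨⟨?_, ?_⟩, ?_, ?_⟩
  · intro i j hij
    have := mul_right_cancel hij
    have := hb.injective this
    omega
  · intro u
    obtain ⟨j, hj⟩ := hb.surjective (u * g)
    refine ⟨j - k, ?_⟩
    show biOf r (j - k + k) * g⁻¹ = u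
    rw [sub_add_cancel, hj, mul_inv_cancel_right]
  · simp only [zero_add, ← hk]
    rw [biOf_idxOf hx]
    simp
  · intro i j
    rw [relOf_actB]
    simp only [inv_mul_cancel_right]
    constructor
    · intro hij
      exact (biOf_lt_iff hx _ _).1 (by omega)
    · intro h
      have := (biOf_lt_iff hx (i + k) (j + k)).2 h
      omega

lemma biOf_shift {x : G × G → Bool} (hx : x ∈ ZOrders G) (g : G) (i : ℤ) :
    biOf (relOf x) (idxOf (relOf x) g + i) = biOf (relOf (actB g x)) i * g := by
  rw [biOf_actB hx g]
  simp [add_comm]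

/-! ### Part 4 : counting lemma -/

lemma mem_fwdInt {H : Type*} [One H] (r : H → H → Prop) (g : H) (n : ℕ) (u : H) :
    u ∈ fwdInt r g n ↔ ∃ i : ℕ, i < n + 1 ∧ biOf r (idxOf r g + (i : ℤ)) = u := by
  unfold fwdInt
  simp

lemma mem_bwdInt {H : Type*} [One H] (r : H → H → Prop) (g : H) (n : ℕ) (u : H) :
    u ∈ bwdInt r g n ↔ ∃ i : ℕ, i < n + 1 ∧ biOf r (idxOf r g - (i : ℤ)) = u := by
  unfold bwdInt
  simp

lemma card_biUnion_fwdInt_le {x : G × G → Bool} (hx : x ∈ ZOrders G) (F : Finset G) (n : ℕ) :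
    (F.biUnion (fun g => fwdInt (relOf x) g n)).card ≤
      F.card + ∑ i ∈ Finset.Icc 1 n,
        (F.filter (fun g => biOf (relOf x) (idxOf (relOf x) g + (i : ℤ)) ∉ F)).card := by
  classical
  set r := relOf x with hr
  have hsub : F.biUnion (fun g => fwdInt r g n) ⊆
      F ∪ (Finset.Icc 1 n).biUnion (fun i =>
        (F.filter (fun g => biOf r (idxOf r g + (i : ℤ)) ∉ F)).image
          (fun g => biOf r (idxOf r g + (i : ℤ)))) := by
    intro u hu
    rcases Finset.mem_biUnion.1 hu with ⟨g, hg, hu⟩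
    rcases (mem_fwdInt r g n _).1 hu with ⟨i, hi, hui⟩
    rw [← hui]
    by_cases h0 : biOf r (idxOf r g + (i : ℤ)) ∈ F
    · exact Finset.mem_union_left _ h0
    · have hi0 : i ≠ 0 := by
        rintro rfl
        rw [Nat.cast_zero, add_zero, biOf_idxOf hx] at h0
        exact h0 hg
      refine Finset.mem_union_right _ (Finset.mem_biUnion.2
        ⟨i, Finset.mem_Icc.2 ⟨Nat.one_le_iff_ne_zero.2 hi0, by omega⟩,
          Finset.mem_image.2 ⟨g, Finset.mem_filter.2 ⟨hg, h0⟩, rfl⟩⟩)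
  calc (F.biUnion (fun g => fwdInt r g n)).card ≤ _ := Finset.card_le_card hsub
  _ ≤ F.card + ((Finset.Icc 1 n).biUnion _).card := Finset.card_union_le _ _
  _ ≤ F.card + ∑ i ∈ Finset.Icc 1 n,
        ((F.filter (fun g => biOf r (idxOf r g + (i : ℤ)) ∉ F)).image
          (fun g => biOf r (idxOf r g + (i : ℤ)))).card := by
      exact Nat.add_le_add_left (Finset.card_biUnion_le) _
  _ ≤ _ := Nat.add_le_add_left (Finset.sum_le_sum fun i _ => Finset.card_image_le) _

lemma card_biUnion_bwdInt_le {x : G × G → Bool} (hx : x ∈ ZOrders G) (F : Finset G) (n : ℕ) :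
    (F.biUnion (fun g => bwdInt (relOf x) g n)).card ≤
      F.card + ∑ i ∈ Finset.Icc 1 n,
        (F.filter (fun g => biOf (relOf x) (idxOf (relOf x) g + (-(i : ℤ))) ∉ F)).card := by
  classical
  set r := relOf x with hr
  have hsub : F.biUnion (fun g => bwdInt r g n) ⊆
      F ∪ (Finset.Icc 1 n).biUnion (fun i =>
        (F.filter (fun g => biOf r (idxOf r g + (-(i : ℤ))) ∉ F)).image
          (fun g => biOf r (idxOf r g + (-(i : ℤ))))) := by
    intro u hu
    rcases Finset.mem_biUnion.1 hu with ⟨g, hg, hu⟩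
    rcases (mem_bwdInt r g n _).1 hu with ⟨i, hi, hui⟩
    rw [sub_eq_add_neg] at hui
    rw [← hui]
    by_cases h0 : biOf r (idxOf r g + (-(i : ℤ))) ∈ F
    · exact Finset.mem_union_left _ h0
    · have hi0 : i ≠ 0 := by
        rintro rfl
        rw [Nat.cast_zero, neg_zero, add_zero, biOf_idxOf hx] at h0
        exact h0 hg
      refine Finset.mem_union_right _ (Finset.mem_biUnion.2
        ⟨i, Finset.mem_Icc.2 ⟨Nat.one_le_iff_ne_zero.2 hi0, by omega⟩,
          Finset.mem_image.2 ⟨g, Finset.mem_filter.2 ⟨hg, h0⟩, rfl⟩⟩)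
  calc (F.biUnion (fun g => bwdInt r g n)).card ≤ _ := Finset.card_le_card hsub
  _ ≤ F.card + ((Finset.Icc 1 n).biUnion _).card := Finset.card_union_le _ _
  _ ≤ F.card + ∑ i ∈ Finset.Icc 1 n,
        ((F.filter (fun g => biOf r (idxOf r g + (-(i : ℤ))) ∉ F)).image
          (fun g => biOf r (idxOf r g + (-(i : ℤ))))).card := by
      exact Nat.add_le_add_left (Finset.card_biUnion_le) _
  _ ≤ _ := Nat.add_le_add_left (Finset.sum_le_sum fun i _ => Finset.card_image_le) _

end P3

lemma measurable_EbtSetP {G : Type*} [One G] [Countable G] (i : ℤ) (u : G) :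
    ∃ E : Set (G × G → Bool), MeasurableSet E ∧
      ∀ x ∈ ZOrders G, (x ∈ E ↔ biOf (relOf x) i = u) :=
  ⟨EbtSet i u, measurable_EbtSet i u,
    fun x hx => (mem_EbtSet_iff i u).trans (biOf_eq_iff x hx i u).symm⟩

noncomputable section Part5

variable {G : Type*} [Group G] [Countable G]

/-- The set of `x ∈ ZOrders` with `bi_x i = u`, with a measurable representation. -/
def EsetD (i : ℤ) (u : G) : Set (G × G → Bool) :=
  ZOrders G ∩ {x | biOf (relOf x) i = u}

lemma measurable_EsetD (i : ℤ) (u : G) : MeasurableSet (EsetD i u) := by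
  obtain ⟨E, hE, hEmem⟩ := measurable_EbtSetP (G := G) i u
  have : EsetD i u = ZOrders G ∩ E := by
    ext x
    constructor
    · rintro ⟨hx, hb⟩
      rw [Set.mem_setOf_eq] at hb
      exact ⟨hx, (hEmem x hx).2 hb⟩
    · rintro ⟨hx, hb⟩
      refine ⟨hx, ?_⟩
      rw [Set.mem_setOf_eq]
      exact (hEmem x hx).1 hb
  rw [this]
  exact measurable_ZOrders.inter hE

lemma disjoint_EsetD (i : ℤ) {u v : G} (huv : u ≠ v) :
    Disjoint (EsetD i u) (EsetD (G := G) i v) := by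
  rw [Set.disjoint_iff_inter_eq_empty]
  ext x
  simp only [EsetD, Set.mem_inter_iff, Set.mem_setOf_eq, Set.mem_empty_iff_false, iff_false]
  rintro ⟨⟨_, h1⟩, ⟨_, h2⟩⟩
  exact huv (h1 ▸ h2 ▸ rfl)

def BsetD (i : ℤ) (S : Finset G) : Set (G × G → Bool) :=
  ZOrders G ∩ {x | biOf (relOf x) i ∉ S}

lemma BsetD_eq (i : ℤ) (S : Finset G) :
    BsetD i S = ZOrders G \ ⋃ u ∈ S, EsetD i u := by
  ext x
  simp only [BsetD, EsetD, Set.mem_inter_iff, Set.mem_setOf_eq, Set.mem_diff, Set.mem_iUnion]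
  constructor
  · rintro ⟨hx, hb⟩
    exact ⟨hx, fun ⟨u, hu, _, hbu⟩ => hb (hbu ▸ hu)⟩
  · rintro ⟨hx, hb⟩
    exact ⟨hx, fun hmem => hb ⟨_, hmem, hx, rfl⟩⟩

lemma measurable_BsetD (i : ℤ) (S : Finset G) : MeasurableSet (BsetD i S) := by
  rw [BsetD_eq]
  exact measurable_ZOrders.diff (MeasurableSet.biUnion S.countable_toSet
    (fun u _ => measurable_EsetD i u))

def AsetD (i : ℤ) (g : G) (F : Finset G) : Set (G × G → Bool) :=
  ZOrders G ∩ {x | biOf (relOf x) (idxOf (relOf x) g + i) ∉ F}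

lemma AsetD_eq_preimage (i : ℤ) (g : G) (F : Finset G) :
    AsetD i g F = actB g ⁻¹' (BsetD i (F.image (fun u => u * g⁻¹))) := by
  ext x
  simp only [AsetD, BsetD, Set.mem_preimage, Set.mem_inter_iff, Set.mem_setOf_eq]
  constructor
  · rintro ⟨hx, hb⟩
    refine ⟨(mem_ZOrders_actB_iff g).2 hx, ?_⟩
    intro hmem
    rcases Finset.mem_image.1 hmem with ⟨v, hv, hveq⟩
    apply hb
    have : biOf (relOf x) (idxOf (relOf x) g + i) = v := by
      rw [biOf_shift hx g i, ← hveq, inv_mul_cancel_right]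
    rw [this]
    exact hv
  · rintro ⟨hx', hb⟩
    have hx : x ∈ ZOrders G := (mem_ZOrders_actB_iff g).1 hx'
    refine ⟨hx, fun hmem => hb ?_⟩
    rw [biOf_shift hx g i] at hmem
    exact Finset.mem_image.2 ⟨_, hmem, by rw [mul_inv_cancel_right]⟩

lemma measurable_AsetD (i : ℤ) (g : G) (F : Finset G) :
    MeasurableSet (AsetD i g F) := by
  rw [AsetD_eq_preimage]
  exact measurable_actB g (measurable_BsetD i _)

/-- the "localization" set. -/
def CsetD (n : ℕ) (U : Finset G) : Set (G × G → Bool) :=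
  ⋂ i ∈ Finset.Icc (-(n : ℤ)) (n : ℤ), ⋃ u ∈ U, EsetD i u

lemma measurable_CsetD (n : ℕ) (U : Finset G) : MeasurableSet (CsetD (G := G) n U) :=
  MeasurableSet.biInter (Finset.Icc (-(n : ℤ)) (n : ℤ)).countable_toSet
    (fun i _ => MeasurableSet.biUnion U.countable_toSet (fun u _ => measurable_EsetD i u))

lemma mem_CsetD {n : ℕ} {U : Finset G} {x : G × G → Bool} :
    x ∈ CsetD n U ↔ x ∈ ZOrders G ∧
      ∀ i ∈ Finset.Icc (-(n : ℤ)) (n : ℤ), biOf (relOf x) i ∈ U := by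
  simp only [CsetD, Set.mem_iInter, Set.mem_iUnion, EsetD, Set.mem_inter_iff, Set.mem_setOf_eq]
  constructor
  · intro h
    have h0 := h 0 (by simp)
    obtain ⟨u, hu, hx, _⟩ := h0
    refine ⟨hx, fun i hi => ?_⟩
    obtain ⟨v, hv, _, hbv⟩ := h i hi
    rw [hbv]
    exact hv
  · rintro ⟨hx, h⟩ i hi
    exact ⟨biOf (relOf x) i, h i hi, hx, rfl⟩

lemma CsetD_subset_ZOrders (n : ℕ) (U : Finset G) : CsetD (G := G) n U ⊆ ZOrders G :=
  fun x hx => (mem_CsetD.1 hx).1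

lemma CsetD_mono (n : ℕ) : Monotone (fun U : Finset G => CsetD (G := G) n U) := by
  intro U V hUV x hx
  rw [mem_CsetD] at hx ⊢
  exact ⟨hx.1, fun i hi => hUV (hx.2 i hi)⟩

/-- For every positive `γ` there is a finite `U` localizing all `biOf i`, `|i| ≤ n`,
up to measure `γ`. -/
lemma exists_CsetD (ν : Measure (G × G → Bool)) [IsProbabilityMeasure ν]
    (hsupp : ν (ZOrders G) = 1) (n : ℕ) {γ : ℝ≥0∞} (hγ : 0 < γ) :
    ∃ U : Finset G, ν (ZOrders G \ CsetD n U) ≤ γ := by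
  obtain ⟨u, hu⟩ := exists_surjective_nat G
  set s : ℕ → Set (G × G → Bool) := fun k => CsetD n ((Finset.range (k + 1)).image u) with hs
  have hmono : Monotone s := fun k l hkl =>
    CsetD_mono n (Finset.image_subset_image (Finset.range_subset_range.2 (by omega)))
  have hunion : (⋃ k, s k) = ZOrders G := by
    apply Set.Subset.antisymm
    · exact Set.iUnion_subset fun k => CsetD_subset_ZOrders n _
    · intro x hx
      have hsel : ∀ i : ℤ, ∃ k : ℕ, u k = biOf (relOf x) i := fun i => hu _
      choose f hf using hsel
      set K := ((Finset.Icc (-(n : ℤ)) (n : ℤ)).image f).sup id with hK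
      refine Set.mem_iUnion.2 ⟨K, ?_⟩
      rw [mem_CsetD]
      refine ⟨hx, fun i hi => ?_⟩
      have hfK : f i ≤ K := Finset.le_sup (f := id) (Finset.mem_image_of_mem f hi)
      refine Finset.mem_image.2 ⟨f i, Finset.mem_range.2 (by omega), hf i⟩
  have htend : Tendsto (fun k => ν (s k)) atTop (nhds (ν (ZOrders G))) := by
    have := tendsto_measure_iUnion_atTop (μ := ν) hmono
    rwa [hunion] at this
  rw [hsupp] at htend
  have hlt : (1 : ℝ≥0∞) - γ < 1 := ENNReal.sub_lt_self ENNReal.one_ne_top one_ne_zero hγ.ne'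
  have hev : ∀ᶠ k in atTop, (1 : ℝ≥0∞) - γ < ν (s k) :=
    htend.eventually (eventually_gt_nhds hlt)
  obtain ⟨k, hk⟩ := hev.exists
  refine ⟨(Finset.range (k + 1)).image u, ?_⟩
  have hdiff : ν (ZOrders G \ s k) = ν (ZOrders G) - ν (s k) :=
    measure_diff (CsetD_subset_ZOrders n _) (measurable_CsetD n _).nullMeasurableSet
      (measure_ne_top ν _)
  rw [hdiff, hsupp]
  calc (1 : ℝ≥0∞) - ν (s k) ≤ 1 - (1 - γ) := tsub_le_tsub_left hk.le 1
  _ ≤ γ := by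
      rw [tsub_le_iff_right]
      exact le_add_tsub

lemma BsetD_subset (n : ℕ) (U : Finset G) {i : ℤ} (hi : i ∈ Finset.Icc (-(n : ℤ)) (n : ℤ))
    (S : Finset G) :
    BsetD i S ⊆ (ZOrders G \ CsetD n U) ∪ ⋃ u ∈ U.filter (fun u => u ∉ S), EsetD i u := by
  intro x hx
  obtain ⟨hxZ, hxS⟩ := hx
  by_cases hC : x ∈ CsetD n U
  · refine Or.inr (Set.mem_iUnion.2 ⟨biOf (relOf x) i, ?_⟩)
    refine Set.mem_iUnion.2 ⟨Finset.mem_filter.2 ⟨(mem_CsetD.1 hC).2 i hi, hxS⟩, ?_⟩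
    exact ⟨hxZ, rfl⟩
  · exact Or.inl ⟨hxZ, hC⟩

/-- `card` of the "escaping" translates is controlled by the symmetric difference. -/
lemma card_filter_le_symmDiff (F : Finset G) (u : G) :
    (F.filter (fun g => u * g ∉ F)).card ≤ (F ∆ F.image (fun h => u * h)).card := by
  apply Finset.card_le_card_of_injOn (fun g => u * g)
  · intro g hg
    rw [Finset.mem_coe, Finset.mem_filter] at hg
    rw [Finset.mem_coe, Finset.mem_symmDiff]
    exact Or.inr ⟨Finset.mem_image_of_mem _ hg.1, hg.2⟩
  · intro a _ b _ h
    exact mul_left_cancel h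

/-- The key estimate: the ν-sum over `g ∈ F` of the escape sets. -/
lemma sum_nu_AsetD_le (ν : Measure (G × G → Bool)) [IsProbabilityMeasure ν]
    (hinv : ∀ g : G, Measure.map (actB g) ν = ν)
    (n : ℕ) (U : Finset G) {i : ℤ} (hi : i ∈ Finset.Icc (-(n : ℤ)) (n : ℤ))
    (F : Finset G) {γ : ℝ≥0∞} (hγ : ν (ZOrders G \ CsetD n U) ≤ γ) :
    ∑ g ∈ F, ν (AsetD i g F) ≤
      (F.card : ℝ≥0∞) * γ + ∑ u ∈ U, ((F ∆ F.image (fun h => u * h)).card : ℝ≥0∞) := by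
  have step1 : ∀ g : G, ν (AsetD i g F) = ν (BsetD i (F.image (fun v => v * g⁻¹))) := by
    intro g
    rw [AsetD_eq_preimage, ← Measure.map_apply (measurable_actB g) (measurable_BsetD i _),
      hinv g]
  have step2 : ∀ g : G, ν (BsetD i (F.image (fun v => v * g⁻¹))) ≤
      γ + ∑ u ∈ U.filter (fun u => u ∉ F.image (fun v => v * g⁻¹)), ν (EsetD i u) := by
    intro g
    calc ν (BsetD i (F.image (fun v => v * g⁻¹)))
        ≤ ν ((ZOrders G \ CsetD n U) ∪
            ⋃ u ∈ U.filter (fun u => u ∉ F.image (fun v => v * g⁻¹)), EsetD i u) :=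
          measure_mono (BsetD_subset n U hi _)
      _ ≤ ν (ZOrders G \ CsetD n U) +
            ν (⋃ u ∈ U.filter (fun u => u ∉ F.image (fun v => v * g⁻¹)), EsetD i u) :=
          measure_union_le _ _
      _ ≤ γ + ∑ u ∈ U.filter (fun u => u ∉ F.image (fun v => v * g⁻¹)), ν (EsetD i u) :=
          add_le_add hγ (measure_biUnion_finset_le _ _)
  have hmemiff : ∀ (u g : G), (u ∈ F.image (fun v => v * g⁻¹)) ↔ u * g ∈ F := by
    intro u g
    constructor
    · rintro hmem
      rcases Finset.mem_image.1 hmem with ⟨v, hv, rfl⟩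
      rwa [inv_mul_cancel_right]
    · intro hmem
      exact Finset.mem_image.2 ⟨u * g, hmem, by rw [mul_inv_cancel_right]⟩
  calc ∑ g ∈ F, ν (AsetD i g F)
      ≤ ∑ g ∈ F, (γ + ∑ u ∈ U.filter (fun u => u ∉ F.image (fun v => v * g⁻¹)), ν (EsetD i u)) :=
        Finset.sum_le_sum (fun g _ => (step1 g) ▸ step2 g)
    _ = (F.card : ℝ≥0∞) * γ +
          ∑ g ∈ F, ∑ u ∈ U.filter (fun u => u ∉ F.image (fun v => v * g⁻¹)), ν (EsetD i u) := by
        rw [Finset.sum_add_distrib, Finset.sum_const, nsmul_eq_mul]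
    _ ≤ (F.card : ℝ≥0∞) * γ + ∑ u ∈ U, ((F ∆ F.image (fun h => u * h)).card : ℝ≥0∞) := by
        refine add_le_add le_rfl ?_
        have hswap : ∑ g ∈ F, ∑ u ∈ U.filter (fun u => u ∉ F.image (fun v => v * g⁻¹)), ν (EsetD i u)
            = ∑ u ∈ U, ∑ g ∈ F.filter (fun g => u * g ∉ F), ν (EsetD i u) := by
          simp only [Finset.sum_filter]
          rw [Finset.sum_comm]
          refine Finset.sum_congr rfl fun u _ => Finset.sum_congr rfl fun g _ => ?_
          simp only [hmemiff]
        rw [hswap]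
        refine Finset.sum_le_sum fun u _ => ?_
        calc ∑ g ∈ F.filter (fun g => u * g ∉ F), ν (EsetD i u)
            ≤ ∑ _g ∈ F.filter (fun g => u * g ∉ F), 1 :=
              Finset.sum_le_sum (fun _ _ => prob_le_one)
          _ = ((F.filter (fun g => u * g ∉ F)).card : ℝ≥0∞) := by
              rw [Finset.sum_const, nsmul_eq_mul, mul_one]
          _ ≤ _ := Nat.cast_le.2 (card_filter_le_symmDiff F u)

end Part5

/-- Lemma 4.1: for a multiorder `ν`, a Følner sequence `(F m)`, `n ∈ ℕ` and `ε > 0`, for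
all sufficiently large `m` there is a Borel set `Õ'_m ⊆ Õ` with `ν(Õ'_m) > 1 − ε` on
which `|[F m, F m + n]^≺| < (1+ε)·|F m|` and `|[F m − n, F m]^≺| < (1+ε)·|F m|`. -/
theorem folner_interval_enlargement {G : Type*} [Group G] [Countable G] [Infinite G]
    (ν : Measure (G × G → Bool)) [IsProbabilityMeasure ν]
    (hsupp : ν (ZOrders G) = 1)
    (hinv : ∀ g : G, Measure.map (actB g) ν = ν)
    (F : ℕ → Finset G) (hF : IsFolnerSeq F) (n : ℕ) (ε : ℝ) (hε : 0 < ε) :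
    ∀ᶠ m in atTop, ∃ O' : Set (G × G → Bool), MeasurableSet O' ∧ O' ⊆ ZOrders G ∧
      ENNReal.ofReal (1 - ε) < ν O' ∧
      ∀ x ∈ O',
        ((((F m).biUnion (fun g => fwdInt (relOf x) g n)).card : ℝ)
            < (1 + ε) * (F m).card) ∧
        ((((F m).biUnion (fun g => bwdInt (relOf x) g n)).card : ℝ)
            < (1 + ε) * (F m).card) := by
  classical
  set c : ℝ := min ε 1 / 2 with hc
  have hc0 : 0 < c := by
    have := lt_min hε one_pos
    simp only [hc]
    linarith
  have hcε : c < ε := by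
    rcases min_cases ε 1 with ⟨h1, _⟩ | ⟨h1, _⟩ <;> rw [hc, h1] <;> linarith
  have hc1 : c ≤ 1 / 2 := by
    have : min ε 1 ≤ 1 := min_le_right _ _
    rw [hc]; linarith
  set γr : ℝ := ε * c / (8 * (n + 1)) with hγr
  have hγr0 : 0 < γr := by positivity
  obtain ⟨U, hU⟩ := exists_CsetD ν hsupp n (γ := ENNReal.ofReal γr) (ENNReal.ofReal_pos.2 hγr0)
  set η : ℝ := γr / (U.card + 1) with hη
  have hη0 : 0 < η := by positivity
  have hev1 : ∀ᶠ m in atTop, ∀ u ∈ U,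
      ((F m ∆ (F m).image (fun h => u * h)).card : ℝ) < η * (F m).card := by
    rw [eventually_all_finset]
    intro u hu
    have htd := hF.2 u
    filter_upwards [htd.eventually (eventually_lt_nhds hη0)] with m hm
    have hpos : (0 : ℝ) < (F m).card := by
      exact_mod_cast Finset.card_pos.2 (hF.1 m)
    rw [div_lt_iff₀ hpos] at hm
    exact hm
  filter_upwards [hev1] with m hm
  set Fm := F m with hFm
  have hFmpos : (0 : ℝ) < Fm.card := by
    exact_mod_cast Finset.card_pos.2 (hF.1 m)
  set K : ℝ≥0∞ := ENNReal.ofReal (ε * Fm.card) with hK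
  have hK0 : K ≠ 0 := by
    simp only [hK, ne_eq, ENNReal.ofReal_eq_zero, not_le]
    positivity
  have hKtop : K ≠ ∞ := ENNReal.ofReal_ne_top
  set φ : (G × G → Bool) → ℝ≥0∞ := fun x => ∑ i ∈ Finset.Icc 1 n, ∑ g ∈ Fm,
      ((AsetD (i : ℤ) g Fm).indicator (fun _ => (1 : ℝ≥0∞)) x +
        (AsetD (-(i : ℤ)) g Fm).indicator (fun _ => (1 : ℝ≥0∞)) x) with hφ
  have hφmeas : Measurable φ :=
    Finset.measurable_sum _ fun i _ => Finset.measurable_sum _ fun g _ =>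
      ((measurable_const.indicator (measurable_AsetD _ g Fm)).add
        (measurable_const.indicator (measurable_AsetD _ g Fm)))
  set Bad : Set (G × G → Bool) := {x | K ≤ φ x} with hBad
  have hBadmeas : MeasurableSet Bad := measurableSet_le measurable_const hφmeas
  refine ⟨ZOrders G \ Bad, measurable_ZOrders.diff hBadmeas, Set.diff_subset, ?_, ?_⟩
  · -- measure estimate
    have hlint : ∫⁻ x, φ x ∂ν = ∑ i ∈ Finset.Icc 1 n, ∑ g ∈ Fm,
        (ν (AsetD (i : ℤ) g Fm) + ν (AsetD (-(i : ℤ)) g Fm)) := by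
      simp only [hφ]
      rw [lintegral_finset_sum _ ((fun i _ => Finset.measurable_sum _ fun g _ =>
        ((measurable_const.indicator (measurable_AsetD _ g Fm)).add
          (measurable_const.indicator (measurable_AsetD _ g Fm)))) :
          ∀ i ∈ Finset.Icc 1 n, Measurable fun x => ∑ g ∈ Fm,
            ((AsetD (i : ℤ) g Fm).indicator (fun _ => (1 : ℝ≥0∞)) x +
              (AsetD (-(i : ℤ)) g Fm).indicator (fun _ => (1 : ℝ≥0∞)) x))]
      refine Finset.sum_congr rfl fun i _ => ?_
      rw [lintegral_finset_sum _ (show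
          ∀ g ∈ Fm, Measurable fun x =>
            ((AsetD (i : ℤ) g Fm).indicator (fun _ => (1 : ℝ≥0∞)) x +
              (AsetD (-(i : ℤ)) g Fm).indicator (fun _ => (1 : ℝ≥0∞)) x) from (fun g _ =>
        ((measurable_const.indicator (measurable_AsetD _ g Fm)).add
          (measurable_const.indicator (measurable_AsetD _ g Fm)))))]
      refine Finset.sum_congr rfl fun g _ => ?_
      rw [lintegral_add_left (measurable_const.indicator (measurable_AsetD _ g Fm)),
        lintegral_indicator_const (measurable_AsetD _ g Fm),
        lintegral_indicator_const (measurable_AsetD _ g Fm), one_mul, one_mul]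
    have hmemIcc : ∀ i ∈ Finset.Icc 1 n, (i : ℤ) ∈ Finset.Icc (-(n : ℤ)) (n : ℤ) := by
      intro i hi
      rw [Finset.mem_Icc] at hi ⊢
      omega
    have hmemIcc' : ∀ i ∈ Finset.Icc 1 n, (-(i : ℤ)) ∈ Finset.Icc (-(n : ℤ)) (n : ℤ) := by
      intro i hi
      rw [Finset.mem_Icc] at hi ⊢
      omega
    have hS : ∑ u ∈ U, ((Fm ∆ Fm.image (fun h => u * h)).card : ℝ≥0∞) ≤
        ENNReal.ofReal (γr * Fm.card) := by
      calc ∑ u ∈ U, ((Fm ∆ Fm.image (fun h => u * h)).card : ℝ≥0∞)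
          = ENNReal.ofReal (∑ u ∈ U, ((Fm ∆ Fm.image (fun h => u * h)).card : ℝ)) := by
            rw [ENNReal.ofReal_sum_of_nonneg (fun u _ => Nat.cast_nonneg _)]
            exact Finset.sum_congr rfl fun u _ => (ENNReal.ofReal_natCast _).symm
        _ ≤ _ := by
            apply ENNReal.ofReal_le_ofReal
            calc ∑ u ∈ U, ((Fm ∆ Fm.image (fun h => u * h)).card : ℝ)
                ≤ ∑ _u ∈ U, η * Fm.card := Finset.sum_le_sum fun u hu => (hm u hu).le
              _ = U.card * (η * Fm.card) := by rw [Finset.sum_const, nsmul_eq_mul]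
              _ ≤ γr * Fm.card := by
                  rw [hη]
                  rw [div_mul_eq_mul_div, mul_comm]
                  rw [div_mul_eq_mul_div]
                  rw [div_le_iff₀ (by positivity)]
                  have hU1 : (U.card : ℝ) ≤ (U.card : ℝ) + 1 := by linarith
                  nlinarith [Nat.cast_nonneg (α := ℝ) U.card, hγr0.le,
                    mul_nonneg hγr0.le hFmpos.le]
    have hgcard : ∀ i ∈ Finset.Icc 1 n, ∀ j ∈ ({(i : ℤ), -(i : ℤ)} : Finset ℤ),
        True := fun _ _ _ _ => trivial
    have hTi : ∀ i ∈ Finset.Icc 1 n,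
        ∑ g ∈ Fm, (ν (AsetD (i : ℤ) g Fm) + ν (AsetD (-(i : ℤ)) g Fm)) ≤
          ENNReal.ofReal (4 * γr * Fm.card) := by
      intro i hi
      rw [Finset.sum_add_distrib]
      have h1 := sum_nu_AsetD_le ν hinv n U (hmemIcc i hi) Fm hU
      have h2 := sum_nu_AsetD_le ν hinv n U (hmemIcc' i hi) Fm hU
      have hcg : (Fm.card : ℝ≥0∞) * ENNReal.ofReal γr = ENNReal.ofReal (γr * Fm.card) := by
        rw [← ENNReal.ofReal_natCast, ← ENNReal.ofReal_mul (Nat.cast_nonneg _), mul_comm]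
      calc ∑ g ∈ Fm, ν (AsetD (i : ℤ) g Fm) + ∑ g ∈ Fm, ν (AsetD (-(i : ℤ)) g Fm)
          ≤ ((Fm.card : ℝ≥0∞) * ENNReal.ofReal γr +
              ∑ u ∈ U, ((Fm ∆ Fm.image (fun h => u * h)).card : ℝ≥0∞)) +
            ((Fm.card : ℝ≥0∞) * ENNReal.ofReal γr +
              ∑ u ∈ U, ((Fm ∆ Fm.image (fun h => u * h)).card : ℝ≥0∞)) := add_le_add h1 h2
        _ ≤ (ENNReal.ofReal (γr * Fm.card) + ENNReal.ofReal (γr * Fm.card)) +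
            (ENNReal.ofReal (γr * Fm.card) + ENNReal.ofReal (γr * Fm.card)) := by
            rw [hcg]
            exact add_le_add (add_le_add le_rfl hS) (add_le_add le_rfl hS)
        _ = ENNReal.ofReal (4 * γr * Fm.card) := by
            rw [← ENNReal.ofReal_add (by positivity) (by positivity),
              ← ENNReal.ofReal_add (by positivity) (by positivity)]
            congr 1
            ring
    have hT : ∫⁻ x, φ x ∂ν ≤ ENNReal.ofReal (ε * c / 2 * Fm.card) := by
      rw [hlint]
      calc ∑ i ∈ Finset.Icc 1 n, ∑ g ∈ Fm,
            (ν (AsetD (i : ℤ) g Fm) + ν (AsetD (-(i : ℤ)) g Fm))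
          ≤ ∑ _i ∈ Finset.Icc 1 n, ENNReal.ofReal (4 * γr * Fm.card) :=
            Finset.sum_le_sum hTi
        _ = ((Finset.Icc 1 n).card : ℝ≥0∞) * ENNReal.ofReal (4 * γr * Fm.card) := by
            rw [Finset.sum_const, nsmul_eq_mul]
        _ ≤ ENNReal.ofReal (ε * c / 2 * Fm.card) := by
            rw [Nat.card_Icc]
            have hcard : (n + 1 - 1 : ℕ) = n := by omega
            rw [hcard, ← ENNReal.ofReal_natCast,
              ← ENNReal.ofReal_mul (Nat.cast_nonneg _)]
            apply ENNReal.ofReal_le_ofReal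
            have h8 : (0:ℝ) < 8 * ((n:ℝ) + 1) := by positivity
            have heq2 : (n:ℝ) * (4 * γr * Fm.card) =
                4 * (n:ℝ) * (ε * c) * Fm.card / (8 * ((n:ℝ) + 1)) := by
              rw [hγr]; ring
            rw [heq2, div_le_iff₀ h8]
            nlinarith [mul_nonneg (mul_nonneg hε.le hc0.le) hFmpos.le,
              Nat.cast_nonneg (α := ℝ) n]
    have hmarkov : K * ν Bad ≤ ∫⁻ x, φ x ∂ν := mul_meas_ge_le_lintegral₀ hφmeas.aemeasurable K
    have hBadle : ν Bad ≤ ENNReal.ofReal (c / 2) := by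
      have hdiv : ν Bad ≤ ENNReal.ofReal (ε * c / 2 * Fm.card) / K := by
        rw [ENNReal.le_div_iff_mul_le (Or.inl hK0) (Or.inl hKtop), mul_comm]
        exact le_trans hmarkov hT
      refine hdiv.trans ?_
      have hb : (0 : ℝ) < ε * (Fm.card : ℝ) := mul_pos hε hFmpos
      rw [hK, ← ENNReal.ofReal_div_of_pos hb]
      apply ENNReal.ofReal_le_ofReal
      have heq3 : ε * c / 2 * (Fm.card : ℝ) / (ε * (Fm.card : ℝ)) =
          c / 2 * (ε * (Fm.card : ℝ) / (ε * (Fm.card : ℝ))) := by ring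
      rw [heq3, div_self (ne_of_gt hb), mul_one]
    have hcover : ν (ZOrders G) ≤ ν (ZOrders G \ Bad) + ν Bad := by
      calc ν (ZOrders G) ≤ ν ((ZOrders G \ Bad) ∪ Bad) :=
            measure_mono (by intro x hx; by_cases h : x ∈ Bad
                             · exact Or.inr h
                             · exact Or.inl ⟨hx, h⟩)
        _ ≤ _ := measure_union_le _ _
    have hlow : 1 - ENNReal.ofReal (c / 2) ≤ ν (ZOrders G \ Bad) := by
      rw [tsub_le_iff_right]
      calc (1 : ℝ≥0∞) = ν (ZOrders G) := hsupp.symm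
        _ ≤ ν (ZOrders G \ Bad) + ν Bad := hcover
        _ ≤ ν (ZOrders G \ Bad) + ENNReal.ofReal (c / 2) := add_le_add le_rfl hBadle
    have heq : (1 : ℝ≥0∞) - ENNReal.ofReal (c / 2) = ENNReal.ofReal (1 - c / 2) := by
      rw [← ENNReal.ofReal_one, ← ENNReal.ofReal_sub _ (by positivity)]
    refine lt_of_lt_of_le ?_ hlow
    rw [heq]
    rw [ENNReal.ofReal_lt_ofReal_iff (by linarith)]
    linarith
  · -- pointwise estimate
    rintro x ⟨hxZ, hxB⟩
    have hφx : φ x < K := lt_of_not_ge hxB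
    have hind : ∀ (j : ℤ) (g : G), (AsetD j g Fm).indicator (fun _ => (1 : ℝ≥0∞)) x =
        if biOf (relOf x) (idxOf (relOf x) g + j) ∉ Fm then 1 else 0 := by
      intro j g
      rw [Set.indicator_apply]
      congr 1
      simp only [AsetD, Set.mem_inter_iff, Set.mem_setOf_eq, eq_iff_iff]
      exact ⟨fun h => h.2, fun h => ⟨hxZ, h⟩⟩
    have hNfwd : ((∑ i ∈ Finset.Icc 1 n,
        (Fm.filter (fun g => biOf (relOf x) (idxOf (relOf x) g + (i : ℤ)) ∉ Fm)).card : ℕ) : ℝ≥0∞)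
        ≤ φ x := by
      rw [Nat.cast_sum]
      refine Finset.sum_le_sum fun i _ => ?_
      have : ((Fm.filter (fun g => biOf (relOf x) (idxOf (relOf x) g + (i : ℤ)) ∉ Fm)).card : ℝ≥0∞)
          = ∑ g ∈ Fm, (AsetD (i : ℤ) g Fm).indicator (fun _ => (1 : ℝ≥0∞)) x := by
        rw [Finset.sum_congr rfl (fun g _ => hind (i : ℤ) g), Finset.sum_boole]
      rw [this]
      exact Finset.sum_le_sum fun g _ => le_self_add
    have hNbwd : ((∑ i ∈ Finset.Icc 1 n,
        (Fm.filter (fun g => biOf (relOf x) (idxOf (relOf x) g + (-(i : ℤ))) ∉ Fm)).card : ℕ) : ℝ≥0∞)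
        ≤ φ x := by
      rw [Nat.cast_sum]
      refine Finset.sum_le_sum fun i _ => ?_
      have : ((Fm.filter (fun g => biOf (relOf x) (idxOf (relOf x) g + (-(i : ℤ))) ∉ Fm)).card : ℝ≥0∞)
          = ∑ g ∈ Fm, (AsetD (-(i : ℤ)) g Fm).indicator (fun _ => (1 : ℝ≥0∞)) x := by
        rw [Finset.sum_congr rfl (fun g _ => hind (-(i : ℤ)) g), Finset.sum_boole]
      rw [this]
      exact Finset.sum_le_sum fun g _ => le_add_self
    have hcast : ∀ N : ℕ, ((N : ℝ≥0∞) < K) → ((N : ℝ) < ε * Fm.card) := by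
      intro N hN
      rw [hK, ← ENNReal.ofReal_natCast] at hN
      exact (ENNReal.ofReal_lt_ofReal_iff_of_nonneg (Nat.cast_nonneg _)).1 hN
    constructor
    · have hcount := card_biUnion_fwdInt_le hxZ Fm n
      have hNlt := hcast _ (lt_of_le_of_lt hNfwd hφx)
      have hcount' : ((Fm.biUnion (fun g => fwdInt (relOf x) g n)).card : ℝ) ≤
          (Fm.card : ℝ) + ((∑ i ∈ Finset.Icc 1 n,
            (Fm.filter (fun g => biOf (relOf x) (idxOf (relOf x) g + (i : ℤ)) ∉ Fm)).card : ℕ) : ℝ) := by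
        exact_mod_cast hcount
      rw [hFm] at hcount' hNlt hFmpos ⊢
      linarith
    · have hcount := card_biUnion_bwdInt_le hxZ Fm n
      have hNlt := hcast _ (lt_of_le_of_lt hNbwd hφx)
      have hcount' : ((Fm.biUnion (fun g => bwdInt (relOf x) g n)).card : ℝ) ≤
          (Fm.card : ℝ) + ((∑ i ∈ Finset.Icc 1 n,
            (Fm.filter (fun g => biOf (relOf x) (idxOf (relOf x) g + (-(i : ℤ))) ∉ Fm)).card : ℕ) : ℝ) := by
        exact_mod_cast hcount
      rw [hFm] at hcount' hNlt hFmpos ⊢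
      linarith
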